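/- For a positive integer n, complex a, and complex s with Re(s + a) > 1, the Mellin-type integral ∑_{j=1}^{n} C(n,j) ((2a-1)^j/(j-1)!) ∫₀¹ (ln x)^(j-1) x^(s+a-2) dx equals 1 - (1 - (2a-1)/(s+a-1))^n. -/

import Mathlib

open Complex MeasureTheory

open Set Filter Real in
private lemma aux_integrable (k : ℕ) {c : ℂ} (hc : 0 < c.re) :
    IntegrableOn (fun x : ℝ => (Real.log x : ℂ)^k * (x:ℂ)^(c-1)) (Set.Ioo (0:ℝ) 1) := by
  set ε : ℝ := c.re / (2 * (k+1)) with hεdef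
  have hε0 : 0 < ε := by positivity
  have hkε : (k:ℝ) * ε < c.re := by
    have h1 : (k:ℝ) * ε = c.re * ((k:ℝ) / (2*((k:ℝ)+1))) := by rw [hεdef]; ring
    have h2 : (k:ℝ) / (2*((k:ℝ)+1)) < 1 := by
      rw [div_lt_one (by positivity)]
      have := Nat.cast_nonneg (α := ℝ) k
      linarith
    calc (k:ℝ) * ε = c.re * ((k:ℝ) / (2*((k:ℝ)+1))) := h1
      _ < c.re * 1 := mul_lt_mul_of_pos_left h2 hc
      _ = c.re := by ring
  have hmeas : ContinuousOn (fun x : ℝ => (Real.log x : ℂ)^k * (x:ℂ)^(c-1)) (Ioo (0:ℝ) 1) := by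
    intro x hx
    apply ContinuousAt.continuousWithinAt
    have h1 : ContinuousAt (fun x : ℝ => (Real.log x : ℂ)^k) x :=
      ((Real.continuousAt_log hx.1.ne').ofReal.pow k)
    have h2 : ContinuousAt (fun x : ℝ => (x:ℂ)^(c-1)) x := by
      apply ContinuousAt.cpow continuous_ofReal.continuousAt continuousAt_const
      exact Or.inl (by exact_mod_cast hx.1)
    exact h1.mul h2
  have hg : IntegrableOn (fun x : ℝ => x ^ (c.re - 1 - (k:ℝ)*ε) / ε^k) (Ioo (0:ℝ) 1) := by
    apply Integrable.div_const
    have : IntervalIntegrable (fun x : ℝ => x ^ (c.re - 1 - (k:ℝ)*ε)) MeasureTheory.volume 0 1 :=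
      intervalIntegral.intervalIntegrable_rpow' (by linarith)
    exact (intervalIntegrable_iff_integrableOn_Ioo_of_le zero_le_one).mp this
  apply Integrable.mono' hg (hmeas.aestronglyMeasurable measurableSet_Ioo)
  rw [ae_restrict_iff' measurableSet_Ioo]
  filter_upwards with x hx
  have hx0 : (0:ℝ) < x := hx.1
  have hnorm : ‖(Real.log x : ℂ)^k * (x:ℂ)^(c-1)‖ = |Real.log x|^k * x ^ (c.re - 1) := by
    rw [norm_mul, norm_pow, Complex.norm_real, Real.norm_eq_abs,
      Complex.norm_cpow_eq_rpow_re_of_pos hx0]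
    simp [Complex.sub_re]
  rw [hnorm]
  have hlog : |Real.log x| ≤ x ^ (-ε) / ε := by
    rw [abs_of_nonpos (Real.log_nonpos hx0.le hx.2.le)]
    have := Real.log_le_rpow_div (x := x⁻¹) (by positivity) hε0
    rwa [Real.log_inv, Real.inv_rpow hx0.le, ← Real.rpow_neg hx0.le] at this
  have hlogk : |Real.log x|^k ≤ x ^ (-(k:ℝ)*ε) / ε^k := by
    calc |Real.log x|^k ≤ (x ^ (-ε) / ε)^k := pow_le_pow_left₀ (abs_nonneg _) hlog k
      _ = x ^ (-(k:ℝ)*ε) / ε^k := by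
          rw [div_pow, ← Real.rpow_natCast (x ^ (-ε)) k, ← Real.rpow_mul hx0.le]
          ring_nf
  calc |Real.log x|^k * x ^ (c.re - 1)
      ≤ (x ^ (-(k:ℝ)*ε) / ε^k) * x ^ (c.re - 1) :=
        mul_le_mul_of_nonneg_right hlogk (Real.rpow_nonneg hx0.le _)
    _ = x ^ (c.re - 1 - (k:ℝ)*ε) / ε^k := by
        rw [div_mul_eq_mul_div, ← Real.rpow_add hx0]
        ring_nf

open Set Filter Real in
private lemma aux_integral (k : ℕ) {c : ℂ} (hc : 0 < c.re) :
    ∫ x in Set.Ioo (0:ℝ) 1, (Real.log x : ℂ)^k * (x:ℂ)^(c-1)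
      = (-1)^k * (k.factorial : ℂ) / c^(k+1) := by
  have hc0 : c ≠ 0 := fun h => by simp [h] at hc
  induction k with
  | zero =>
      simp only [pow_zero, one_mul, Nat.factorial_zero, Nat.cast_one, pow_one]
      rw [← integral_Ioc_eq_integral_Ioo, ← intervalIntegral.integral_of_le zero_le_one]
      rw [integral_cpow (Or.inl (by simp [Complex.sub_re]; linarith))]
      simp [sub_add_cancel, Complex.zero_cpow hc0]
  | succ k ih =>
      set f : ℕ → ℝ → ℂ := fun j x => (Real.log x : ℂ)^j * (x:ℂ)^(c-1) with hf
      have hint : ∀ j : ℕ, IntegrableOn (f j) (Ioo (0:ℝ) 1) := fun j => aux_integrable j hc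
      set F : ℝ → ℂ := fun x => (Real.log x : ℂ)^(k+1) * ((x:ℂ)^c / c) with hF
      set φ : ℝ → ℂ := fun x => ((k:ℂ)+1) / c * f k x + f (k+1) x with hφ
      have hderiv : ∀ x ∈ Ioo (0:ℝ) 1, HasDerivAt F (φ x) x := by
        intro x hx
        have hx0 : (0:ℝ) < x := hx.1
        have hxne : (x:ℂ) ≠ 0 := Complex.ofReal_ne_zero.mpr hx0.ne'
        have hlog : HasDerivAt (fun y : ℝ => (Real.log y : ℂ)^(k+1))
            ((↑(k+1) : ℂ) * (Real.log x : ℂ)^k * (↑x)⁻¹) x := by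
          have h1 := ((Real.hasDerivAt_log hx0.ne').pow (k+1)).ofReal_comp
          simpa [Complex.ofReal_pow, Complex.ofReal_mul, Complex.ofReal_inv,
            Complex.ofReal_natCast, Nat.add_sub_cancel] using h1
        have hcp : HasDerivAt (fun y : ℝ => (y:ℂ)^c / c) ((x:ℂ)^(c-1)) x := by
          have hr : c - 1 ≠ -1 := by
            intro hcon
            apply hc0
            have := congrArg (· + 1) hcon
            simpa using this
          have := hasDerivAt_ofReal_cpow_const' hx0.ne' hr
          simpa [sub_add_cancel] using this
        have hmul := hlog.mul hcp
        refine hmul.congr_deriv ?_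
        symm
        have hxc : (x:ℂ)^(c-1) = (x:ℂ)^c / x := by
          rw [Complex.cpow_sub _ _ hxne, Complex.cpow_one]
        rw [hφ, hf]
        simp only
        rw [hxc]
        push_cast
        field_simp
      have hF0 : F 0 = 0 := by simp [hF, Complex.zero_cpow hc0]
      have hF1 : F 1 = 0 := by simp [hF]
      have htend : Tendsto F (nhdsWithin 0 (Ioi (0:ℝ))) (nhds 0) := by
        have hlit : (fun x : ℝ => |Real.log x| ^ ((k:ℝ)+1)) =o[nhdsWithin 0 (Ioi (0:ℝ))]
            (fun x : ℝ => x ^ (-(c.re/2))) :=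
          isLittleO_abs_log_rpow_rpow_nhdsGT_zero _ (by linarith)
        have hlit2 : (fun x : ℝ => |Real.log x| ^ ((k:ℝ)+1) * x ^ c.re)
            =o[nhdsWithin 0 (Ioi (0:ℝ))] (fun x : ℝ => x ^ (-(c.re/2)) * x ^ c.re) :=
          hlit.mul_isBigO (Asymptotics.isBigO_refl _ _)
        have heq : (fun x : ℝ => x ^ (-(c.re/2)) * x ^ c.re) =ᶠ[nhdsWithin 0 (Ioi (0:ℝ))]
            (fun x : ℝ => x ^ (c.re/2)) := by
          filter_upwards [self_mem_nhdsWithin] with x (hx : 0 < x)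
          rw [← Real.rpow_add hx]
          congr 1
          ring
        have htend2 : Tendsto (fun x : ℝ => x ^ (c.re/2)) (nhdsWithin 0 (Ioi (0:ℝ))) (nhds 0) := by
          have := (Real.continuousAt_rpow_const 0 (c.re/2)
            (Or.inr (by linarith))).continuousWithinAt (s := Ioi (0:ℝ))
          simpa [ContinuousWithinAt, Real.zero_rpow (by positivity : c.re/2 ≠ 0)] using this
        have h3 : Tendsto (fun x : ℝ => |Real.log x| ^ ((k:ℝ)+1) * x ^ c.re)
            (nhdsWithin 0 (Ioi (0:ℝ))) (nhds 0) :=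
          (hlit2.congr' (Filter.EventuallyEq.refl _ _) heq).trans_tendsto htend2
        apply squeeze_zero_norm' _ (show Filter.Tendsto _ _ (nhds 0) by simpa using h3.div_const ‖c‖)
        filter_upwards [self_mem_nhdsWithin] with x (hx : 0 < x)
        rw [hF]
        simp only
        rw [norm_mul, norm_pow, Complex.norm_real, Real.norm_eq_abs, norm_div,
          Complex.norm_cpow_eq_rpow_re_of_pos hx]
        rw [← Real.rpow_natCast |Real.log x| (k+1)]
        push_cast
        exact le_of_eq (by rw [mul_div_assoc])
      have hcont : ContinuousOn F (Icc (0:ℝ) 1) := by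
        intro x hx
        rcases eq_or_lt_of_le hx.1 with h0 | h0
        · rw [← h0]
          have h1 : ContinuousWithinAt F (Ioi (0:ℝ)) 0 := by
            rw [ContinuousWithinAt, hF0]
            exact htend
          have h2 : ContinuousWithinAt F (insert (0:ℝ) (Ioi (0:ℝ))) 0 := continuousWithinAt_insert_self.mpr h1
          exact h2.mono (fun y hy => by
            rcases eq_or_lt_of_le hy.1 with h | h
            · exact Or.inl h.symm
            · exact Or.inr h)
        · apply ContinuousAt.continuousWithinAt
          have h1 : ContinuousAt (fun y : ℝ => (Real.log y : ℂ)^(k+1)) x :=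
            ((Real.continuousAt_log h0.ne').ofReal.pow (k+1))
          have h2 : ContinuousAt (fun y : ℝ => (y:ℂ)^c / c) x := by
            apply ContinuousAt.div_const
            apply ContinuousAt.cpow continuous_ofReal.continuousAt continuousAt_const
            exact Or.inl (by exact_mod_cast h0)
          exact h1.mul h2
      have hIntφ : IntervalIntegrable φ MeasureTheory.volume 0 1 := by
        rw [intervalIntegrable_iff_integrableOn_Ioo_of_le zero_le_one]
        exact ((hint k).const_mul _).add (hint (k+1))
      have hFTC := intervalIntegral.integral_eq_sub_of_hasDeriv_right_of_le zero_le_one hcont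
        (fun x hx => (hderiv x hx).hasDerivWithinAt) hIntφ
      rw [hF1, hF0, sub_zero] at hFTC
      rw [intervalIntegral.integral_of_le zero_le_one, integral_Ioc_eq_integral_Ioo] at hFTC
      rw [hφ] at hFTC
      simp only at hFTC
      rw [MeasureTheory.integral_add ((hint k).const_mul _) (hint (k+1))] at hFTC
      rw [MeasureTheory.integral_const_mul] at hFTC
      simp only [hf] at hFTC
      rw [ih] at hFTC
      have hck2 : c ^ (k+2) ≠ 0 := pow_ne_zero _ hc0
      have hI := eq_neg_of_add_eq_zero_right hFTC
      rw [hI, Nat.factorial_succ]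
      push_cast
      field_simp
      ring

/-- For a positive integer `n` and complex `a`, `s` with `Re(s+a) > 1`,
`∑_{j=1}^n C(n,j) ((2a-1)^j/(j-1)!) ∫₀¹ (ln x)^(j-1) x^(s+a-2) dx
  = 1 - (1 - (2a-1)/(s+a-1))^n`. -/
theorem stmt7 (n : ℕ) (hn : 1 ≤ n) (a s : ℂ) (h : 1 < (s+a).re) :
    ∑ j ∈ Finset.Icc 1 n, (n.choose j : ℂ) * (2*a-1)^j / ((j-1).factorial : ℂ) *
        ∫ x in Set.Ioo (0:ℝ) 1, (Real.log x : ℂ)^(j-1) * (x:ℂ)^(s+a-2)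
      = 1 - (1 - (2*a-1)/(s+a-1))^n := by
  set c : ℂ := s + a - 1 with hcdef
  have hc : 0 < c.re := by
    rw [hcdef]
    simp only [Complex.sub_re, Complex.one_re]
    linarith
  have hc0 : c ≠ 0 := fun hcon => by simp [hcon] at hc
  set u : ℂ := (2*a-1)/c with hudef
  have hexp : s + a - 2 = c - 1 := by rw [hcdef]; ring
  rw [hexp]
  have hterm : ∀ j ∈ Finset.Icc 1 n,
      (n.choose j : ℂ) * (2*a-1)^j / ((j-1).factorial : ℂ) *
        ∫ x in Set.Ioo (0:ℝ) 1, (Real.log x : ℂ)^(j-1) * (x:ℂ)^(c-1)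
      = -((n.choose j : ℂ) * (-u)^j) := by
    intro j hj
    rw [Finset.mem_Icc] at hj
    have hj1 : 1 ≤ j := hj.1
    rw [aux_integral (j-1) hc]
    have hjj : j - 1 + 1 = j := Nat.sub_add_cancel hj1
    rw [hjj]
    have hfac : ((j-1).factorial : ℂ) ≠ 0 := by
      exact_mod_cast Nat.factorial_ne_zero _
    have hcj : c ^ j ≠ 0 := pow_ne_zero _ hc0
    have hsign : (-1 : ℂ) ^ (j-1) * (-1) = (-1)^j := by
      rw [← pow_succ, hjj]
    have hneg : (-((2*a-1)/c))^j = ((-1:ℂ)^(j-1) * -1) * ((2*a-1)^j / c^j) := by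
      rw [← neg_div, div_pow, neg_pow, ← hsign]
      ring
    rw [hudef, hneg]
    field_simp
  rw [Finset.sum_congr rfl hterm]
  have hbin : ((1:ℂ) - u)^n = ∑ j ∈ Finset.range (n+1), (-u)^j * (n.choose j : ℂ) := by
    have := add_pow (-u) 1 n
    simp only [one_pow, mul_one] at this
    rw [show (1:ℂ) - u = -u + 1 by ring, this]
  have hins : Finset.range (n+1) = insert 0 (Finset.Icc 1 n) := by
    ext j
    simp only [Finset.mem_range, Finset.mem_insert, Finset.mem_Icc]
    omega
  rw [hins, Finset.sum_insert (by simp)] at hbin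
  simp only [pow_zero, Nat.choose_zero_right, Nat.cast_one, one_mul] at hbin
  have hcomm : ∑ x ∈ Finset.Icc 1 n, -((n.choose x : ℂ) * (-u)^x)
      = -∑ x ∈ Finset.Icc 1 n, (-u)^x * (n.choose x : ℂ) := by
    rw [← Finset.sum_neg_distrib]
    exact Finset.sum_congr rfl fun x _ => by ring
  rw [hcomm, hbin]
  ring
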